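/- Let C be a category of Eilenberg–Moore algebras for a finitary monad T on Set and F an endofunctor on C. The inclusion of the category of F-coalgebras carried by free finitely generated objects into the category of F-coalgebras carried by perfectly presentable objects (split quotients of ffg objects) is cofinal. In particular: (1) every F-coalgebra (X, c) with X a split quotient of an ffg object W (via e : W ↠ X, m : X ↣ W, e∘m = id) admits a coalgebra homomorphism m : (X, c) → (W, w) into the ffg-coalgebra w := Fm ∘ c ∘ e, and (2) e : (W, w) → (X, c) is also a coalgebra homomorphism, so any span of homomorphisms from (X, c) into ffg-coalgebras is connected by a zig-zag through (W, w). -/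

import Mathlib

open CategoryTheory CategoryTheory.Limits

universe v u

variable {C : Type u} [Category.{v} C]

/-- An object is perfectly presentable iff it is a split quotient of an object
satisfying `FFG` (being free finitely generated). -/
def PerfectlyPresentable (FFG : C → Prop) (X : C) : Prop :=
  ∃ (W : C) (e : W ⟶ X) (m : X ⟶ W), FFG W ∧ m ≫ e = 𝟙 X

/-- The inclusion of coalgebras with ffg carrier into coalgebras with perfectly
presentable carrier is cofinal; in particular (1) every coalgebra `(X, c)` with `X` a
split quotient of an ffg object `W` (via `e : W ↠ X`, `m : X ↣ W`) admits the coalgebra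
homomorphism `m` into the ffg-coalgebra `w := Fm ∘ c ∘ e`, and (2) `e` is also a
coalgebra homomorphism from `(W, w)` to `(X, c)`. -/
theorem ffgCoalgebras_final_in_perfectlyPresentableCoalgebras
    (F : C ⥤ C) (FFG : C → Prop) :
    (Functor.Final (ObjectProperty.ιOfLE
      (P := fun c : Endofunctor.Coalgebra F => FFG c.V)
      (P' := fun c : Endofunctor.Coalgebra F => PerfectlyPresentable FFG c.V)
      (fun c hc => ⟨c.V, 𝟙 c.V, 𝟙 c.V, hc, Category.id_comp _⟩))) ∧
    (∀ (X W : C) (c : X ⟶ F.obj X) (e : W ⟶ X) (m : X ⟶ W), m ≫ e = 𝟙 X →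
      (m ≫ (e ≫ c ≫ F.map m) = c ≫ F.map m) ∧
      (e ≫ c = (e ≫ c ≫ F.map m) ≫ F.map e)) := by
  constructor
  · constructor
    intro d
    obtain ⟨W, e, m, hW, hme⟩ := d.property
    -- the ffg coalgebra on W
    let c := d.obj.str
    let w : W ⟶ F.obj W := e ≫ c ≫ F.map m
    let Wcoalg : Endofunctor.Coalgebra F := ⟨W, w⟩
    let Wobj : ObjectProperty.FullSubcategory (fun c : Endofunctor.Coalgebra F => FFG c.V) :=
      ⟨Wcoalg, hW⟩
    -- m is a coalgebra homomorphism (X, c) → (W, w)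
    let mHom : d.obj ⟶ Wcoalg :=
      { f := m
        h := by
          show c ≫ F.map m = m ≫ (e ≫ c ≫ F.map m)
          rw [← Category.assoc, hme, Category.id_comp] }
    -- e is a coalgebra homomorphism (W, w) → (X, c)
    let eHom : Wcoalg ⟶ d.obj :=
      { f := e
        h := by
          show (e ≫ c ≫ F.map m) ≫ F.map e = e ≫ c
          simp only [Category.assoc, ← F.map_comp, hme, F.map_id, Category.comp_id] }
    have hsplit : mHom ≫ eHom = 𝟙 d.obj := by
      apply Endofunctor.Coalgebra.ext
      simpa using hme
    let G := ObjectProperty.ιOfLE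
      (P := fun c : Endofunctor.Coalgebra F => FFG c.V)
      (P' := fun c : Endofunctor.Coalgebra F => PerfectlyPresentable FFG c.V)
      (fun c hc => ⟨c.V, 𝟙 c.V, 𝟙 c.V, hc, Category.id_comp _⟩)
    let mArrow : StructuredArrow d G := StructuredArrow.mk (Y := Wobj) (ObjectProperty.homMk mHom : d ⟶ G.obj Wobj)
    have toArrow : ∀ j : StructuredArrow d G, mArrow ⟶ j := by
      intro j
      refine StructuredArrow.homMk (ObjectProperty.homMk (eHom ≫ j.hom.hom : Wcoalg ⟶ _) : Wobj ⟶ j.right) ?_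
      ext1
      show mHom ≫ (eHom ≫ j.hom.hom) = j.hom.hom
      rw [← Category.assoc, hsplit, Category.id_comp]
    have : Nonempty (StructuredArrow d G) := ⟨mArrow⟩
    apply zigzag_isConnected
    intro j₁ j₂
    exact (Zigzag.of_inv (toArrow j₁)).trans (Zigzag.of_hom (toArrow j₂))
  · intro X W c e m hme
    constructor
    · rw [← Category.assoc, hme, Category.id_comp]
    · simp only [Category.assoc, ← F.map_comp, hme, F.map_id, Category.comp_id]
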